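/- Let g₁, g₂, g₃, g₄ : ℂ → ℂ be twice differentiable, let (a₁,a₂,a₃,a₄), (b₁,b₂,b₃,b₄), (c₁,c₂,c₃,c₄), (d₁,d₂,d₃,d₄) ∈ ℂ⁴ and β₁,…,β₄ ∈ ℂ, and define ϑ(x,r,t,z) = g₁(a₁x+a₂r+a₃t+a₄z+β₁) + g₂(b₁x+b₂r+b₃t+b₄z+β₂) + g₃(c₁x+c₂r+c₃t+c₄z+β₃) + g₄(d₁x+d₂r+d₃t+d₄z+β₄). Then at every point ϑ_{tt}·ϑ_{rr} − (ϑ_{rt})² = (b₂d₃−b₃d₂)²g₂''g₄'' + (b₂c₃−b₃c₂)²g₂''g₃'' + (a₂d₃−a₃d₂)²g₁''g₄'' + (c₂a₃−c₃a₂)²g₁''g₃'' + (a₂b₃−a₃b₂)²g₁''g₂'' + (c₂d₃−c₃d₂)²g₃''g₄'', where g_j'' is evaluated at the argument of g_j. In particular, the condition ϑ_{tt}ϑ_{rr} − (ϑ_{rt})² ≠ 0 of existence of the Legendre transformation for the second heavenly equation holds exactly when this sum is nonzero. -/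

import Mathlib

/-- Partial derivative with respect to the first argument. -/
noncomputable def pd1 (f : ℂ → ℂ → ℂ → ℂ → ℂ) (a b c d : ℂ) : ℂ :=
  deriv (fun s => f s b c d) a

/-- Partial derivative with respect to the second argument. -/
noncomputable def pd2 (f : ℂ → ℂ → ℂ → ℂ → ℂ) (a b c d : ℂ) : ℂ :=
  deriv (fun s => f a s c d) b

/-- Partial derivative with respect to the third argument. -/
noncomputable def pd3 (f : ℂ → ℂ → ℂ → ℂ → ℂ) (a b c d : ℂ) : ℂ :=
  deriv (fun s => f a b s d) c


lemma dcomp0 (g : ℂ → ℂ) (hg : Differentiable ℂ g) (k c s : ℂ) :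
    HasDerivAt (fun t => g (k * t + c)) (k * deriv g (k * s + c)) s := by
  have hlin : HasDerivAt (fun t : ℂ => k * t + c) k s := by
    simpa using ((hasDerivAt_id s).const_mul k).add_const c
  simpa [Function.comp_def, mul_comm] using ((hg (k * s + c)).hasDerivAt.comp s hlin)

lemma dcomp (g : ℂ → ℂ) (hg : Differentiable ℂ g) (m k c s : ℂ) :
    HasDerivAt (fun t => m * g (k * t + c)) (m * (k * deriv g (k * s + c))) s :=
  (dcomp0 g hg k c s).const_mul m

lemma derivSum1 (g₁ g₂ g₃ g₄ : ℂ → ℂ)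
    (h₁ : Differentiable ℂ g₁) (h₂ : Differentiable ℂ g₂)
    (h₃ : Differentiable ℂ g₃) (h₄ : Differentiable ℂ g₄)
    (k₁ k₂ k₃ k₄ c₁ c₂ c₃ c₄ s : ℂ) :
    deriv (fun t => g₁ (k₁ * t + c₁) + g₂ (k₂ * t + c₂)
        + g₃ (k₃ * t + c₃) + g₄ (k₄ * t + c₄)) s
      = k₁ * deriv g₁ (k₁ * s + c₁) + k₂ * deriv g₂ (k₂ * s + c₂)
        + k₃ * deriv g₃ (k₃ * s + c₃) + k₄ * deriv g₄ (k₄ * s + c₄) :=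
  ((((dcomp0 g₁ h₁ k₁ c₁ s).add (dcomp0 g₂ h₂ k₂ c₂ s)).add
      (dcomp0 g₃ h₃ k₃ c₃ s)).add (dcomp0 g₄ h₄ k₄ c₄ s)).deriv

lemma derivSum (g₁ g₂ g₃ g₄ : ℂ → ℂ)
    (h₁ : Differentiable ℂ g₁) (h₂ : Differentiable ℂ g₂)
    (h₃ : Differentiable ℂ g₃) (h₄ : Differentiable ℂ g₄)
    (m₁ m₂ m₃ m₄ k₁ k₂ k₃ k₄ c₁ c₂ c₃ c₄ s : ℂ) :
    deriv (fun t => m₁ * g₁ (k₁ * t + c₁) + m₂ * g₂ (k₂ * t + c₂)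
        + m₃ * g₃ (k₃ * t + c₃) + m₄ * g₄ (k₄ * t + c₄)) s
      = m₁ * (k₁ * deriv g₁ (k₁ * s + c₁)) + m₂ * (k₂ * deriv g₂ (k₂ * s + c₂))
        + m₃ * (k₃ * deriv g₃ (k₃ * s + c₃)) + m₄ * (k₄ * deriv g₄ (k₄ * s + c₄)) :=
  ((((dcomp g₁ h₁ m₁ k₁ c₁ s).add (dcomp g₂ h₂ m₂ k₂ c₂ s)).add
      (dcomp g₃ h₃ m₃ k₃ c₃ s)).add (dcomp g₄ h₄ m₄ k₄ c₄ s)).deriv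

lemma deriv_diff (g : ℂ → ℂ) (hg : ContDiff ℂ 2 g) : Differentiable ℂ (deriv g) := by
  have h2 : ContDiff ℂ ((1 : WithTop ℕ∞) + 1) g := by
    exact_mod_cast hg
  exact ((contDiff_succ_iff_deriv.mp h2).2.2).differentiable one_ne_zero

/-- the Legendre-transformation condition
`ϑ_tt ϑ_rr − ϑ_rt² ≠ 0` for the four-term functional ansatz for the second
heavenly equation. -/
theorem stmt15 (g₁ g₂ g₃ g₄ : ℂ → ℂ)
    (hg₁ : ContDiff ℂ 2 g₁) (hg₂ : ContDiff ℂ 2 g₂)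
    (hg₃ : ContDiff ℂ 2 g₃) (hg₄ : ContDiff ℂ 2 g₄)
    (a₁ a₂ a₃ a₄ b₁ b₂ b₃ b₄ c₁ c₂ c₃ c₄ d₁ d₂ d₃ d₄ β₁ β₂ β₃ β₄ : ℂ)
    (ϑ : ℂ → ℂ → ℂ → ℂ → ℂ)
    (hϑ : ϑ = fun x r t z =>
      g₁ (a₁ * x + a₂ * r + a₃ * t + a₄ * z + β₁)
        + g₂ (b₁ * x + b₂ * r + b₃ * t + b₄ * z + β₂)
        + g₃ (c₁ * x + c₂ * r + c₃ * t + c₄ * z + β₃)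
        + g₄ (d₁ * x + d₂ * r + d₃ * t + d₄ * z + β₄)) :
    ∀ x r t z : ℂ,
      (pd3 (pd3 ϑ) x r t z * pd2 (pd2 ϑ) x r t z - (pd2 (pd3 ϑ) x r t z) ^ 2
        = (b₂ * d₃ - b₃ * d₂) ^ 2
              * deriv (deriv g₂) (b₁ * x + b₂ * r + b₃ * t + b₄ * z + β₂)
              * deriv (deriv g₄) (d₁ * x + d₂ * r + d₃ * t + d₄ * z + β₄)
          + (b₂ * c₃ - b₃ * c₂) ^ 2
              * deriv (deriv g₂) (b₁ * x + b₂ * r + b₃ * t + b₄ * z + β₂)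
              * deriv (deriv g₃) (c₁ * x + c₂ * r + c₃ * t + c₄ * z + β₃)
          + (a₂ * d₃ - a₃ * d₂) ^ 2
              * deriv (deriv g₁) (a₁ * x + a₂ * r + a₃ * t + a₄ * z + β₁)
              * deriv (deriv g₄) (d₁ * x + d₂ * r + d₃ * t + d₄ * z + β₄)
          + (c₂ * a₃ - c₃ * a₂) ^ 2
              * deriv (deriv g₁) (a₁ * x + a₂ * r + a₃ * t + a₄ * z + β₁)
              * deriv (deriv g₃) (c₁ * x + c₂ * r + c₃ * t + c₄ * z + β₃)
          + (a₂ * b₃ - a₃ * b₂) ^ 2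
              * deriv (deriv g₁) (a₁ * x + a₂ * r + a₃ * t + a₄ * z + β₁)
              * deriv (deriv g₂) (b₁ * x + b₂ * r + b₃ * t + b₄ * z + β₂)
          + (c₂ * d₃ - c₃ * d₂) ^ 2
              * deriv (deriv g₃) (c₁ * x + c₂ * r + c₃ * t + c₄ * z + β₃)
              * deriv (deriv g₄) (d₁ * x + d₂ * r + d₃ * t + d₄ * z + β₄))
      ∧ (pd3 (pd3 ϑ) x r t z * pd2 (pd2 ϑ) x r t z - (pd2 (pd3 ϑ) x r t z) ^ 2 ≠ 0
        ↔ (b₂ * d₃ - b₃ * d₂) ^ 2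
              * deriv (deriv g₂) (b₁ * x + b₂ * r + b₃ * t + b₄ * z + β₂)
              * deriv (deriv g₄) (d₁ * x + d₂ * r + d₃ * t + d₄ * z + β₄)
          + (b₂ * c₃ - b₃ * c₂) ^ 2
              * deriv (deriv g₂) (b₁ * x + b₂ * r + b₃ * t + b₄ * z + β₂)
              * deriv (deriv g₃) (c₁ * x + c₂ * r + c₃ * t + c₄ * z + β₃)
          + (a₂ * d₃ - a₃ * d₂) ^ 2
              * deriv (deriv g₁) (a₁ * x + a₂ * r + a₃ * t + a₄ * z + β₁)
              * deriv (deriv g₄) (d₁ * x + d₂ * r + d₃ * t + d₄ * z + β₄)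
          + (c₂ * a₃ - c₃ * a₂) ^ 2
              * deriv (deriv g₁) (a₁ * x + a₂ * r + a₃ * t + a₄ * z + β₁)
              * deriv (deriv g₃) (c₁ * x + c₂ * r + c₃ * t + c₄ * z + β₃)
          + (a₂ * b₃ - a₃ * b₂) ^ 2
              * deriv (deriv g₁) (a₁ * x + a₂ * r + a₃ * t + a₄ * z + β₁)
              * deriv (deriv g₂) (b₁ * x + b₂ * r + b₃ * t + b₄ * z + β₂)
          + (c₂ * d₃ - c₃ * d₂) ^ 2
              * deriv (deriv g₃) (c₁ * x + c₂ * r + c₃ * t + c₄ * z + β₃)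
              * deriv (deriv g₄) (d₁ * x + d₂ * r + d₃ * t + d₄ * z + β₄) ≠ 0) := by
  
  intro x r t z
  subst hϑ
  have hd₁ : Differentiable ℂ g₁ := hg₁.differentiable (by norm_num)
  have hd₂ : Differentiable ℂ g₂ := hg₂.differentiable (by norm_num)
  have hd₃ : Differentiable ℂ g₃ := hg₃.differentiable (by norm_num)
  have hd₄ : Differentiable ℂ g₄ := hg₄.differentiable (by norm_num)
  have hd₁' := deriv_diff g₁ hg₁
  have hd₂' := deriv_diff g₂ hg₂
  have hd₃' := deriv_diff g₃ hg₃
  have hd₄' := deriv_diff g₄ hg₄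
  -- first derivatives
  have h3 : pd3 (fun x r t z =>
      g₁ (a₁ * x + a₂ * r + a₃ * t + a₄ * z + β₁)
        + g₂ (b₁ * x + b₂ * r + b₃ * t + b₄ * z + β₂)
        + g₃ (c₁ * x + c₂ * r + c₃ * t + c₄ * z + β₃)
        + g₄ (d₁ * x + d₂ * r + d₃ * t + d₄ * z + β₄))
      = fun x r t z =>
        a₃ * deriv g₁ (a₁ * x + a₂ * r + a₃ * t + a₄ * z + β₁)
        + b₃ * deriv g₂ (b₁ * x + b₂ * r + b₃ * t + b₄ * z + β₂)
        + c₃ * deriv g₃ (c₁ * x + c₂ * r + c₃ * t + c₄ * z + β₃)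
        + d₃ * deriv g₄ (d₁ * x + d₂ * r + d₃ * t + d₄ * z + β₄) := by
    funext x r t z
    simp only [pd3]
    have e₁ : ∀ s : ℂ, a₁ * x + a₂ * r + a₃ * s + a₄ * z + β₁
        = a₃ * s + (a₁ * x + a₂ * r + a₄ * z + β₁) := fun s => by ring
    have e₂ : ∀ s : ℂ, b₁ * x + b₂ * r + b₃ * s + b₄ * z + β₂
        = b₃ * s + (b₁ * x + b₂ * r + b₄ * z + β₂) := fun s => by ring
    have e₃ : ∀ s : ℂ, c₁ * x + c₂ * r + c₃ * s + c₄ * z + β₃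
        = c₃ * s + (c₁ * x + c₂ * r + c₄ * z + β₃) := fun s => by ring
    have e₄ : ∀ s : ℂ, d₁ * x + d₂ * r + d₃ * s + d₄ * z + β₄
        = d₃ * s + (d₁ * x + d₂ * r + d₄ * z + β₄) := fun s => by ring
    simp only [e₁, e₂, e₃, e₄]
    rw [derivSum1 g₁ g₂ g₃ g₄ hd₁ hd₂ hd₃ hd₄]
  have h2 : pd2 (fun x r t z =>
      g₁ (a₁ * x + a₂ * r + a₃ * t + a₄ * z + β₁)
        + g₂ (b₁ * x + b₂ * r + b₃ * t + b₄ * z + β₂)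
        + g₃ (c₁ * x + c₂ * r + c₃ * t + c₄ * z + β₃)
        + g₄ (d₁ * x + d₂ * r + d₃ * t + d₄ * z + β₄))
      = fun x r t z =>
        a₂ * deriv g₁ (a₁ * x + a₂ * r + a₃ * t + a₄ * z + β₁)
        + b₂ * deriv g₂ (b₁ * x + b₂ * r + b₃ * t + b₄ * z + β₂)
        + c₂ * deriv g₃ (c₁ * x + c₂ * r + c₃ * t + c₄ * z + β₃)
        + d₂ * deriv g₄ (d₁ * x + d₂ * r + d₃ * t + d₄ * z + β₄) := by
    funext x r t z
    simp only [pd2]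
    have e₁ : ∀ s : ℂ, a₁ * x + a₂ * s + a₃ * t + a₄ * z + β₁
        = a₂ * s + (a₁ * x + a₃ * t + a₄ * z + β₁) := fun s => by ring
    have e₂ : ∀ s : ℂ, b₁ * x + b₂ * s + b₃ * t + b₄ * z + β₂
        = b₂ * s + (b₁ * x + b₃ * t + b₄ * z + β₂) := fun s => by ring
    have e₃ : ∀ s : ℂ, c₁ * x + c₂ * s + c₃ * t + c₄ * z + β₃
        = c₂ * s + (c₁ * x + c₃ * t + c₄ * z + β₃) := fun s => by ring
    have e₄ : ∀ s : ℂ, d₁ * x + d₂ * s + d₃ * t + d₄ * z + β₄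
        = d₂ * s + (d₁ * x + d₃ * t + d₄ * z + β₄) := fun s => by ring
    simp only [e₁, e₂, e₃, e₄]
    rw [derivSum1 g₁ g₂ g₃ g₄ hd₁ hd₂ hd₃ hd₄]
  -- abbreviations for second derivatives at the evaluated arguments
  set G₁ := deriv (deriv g₁) (a₁ * x + a₂ * r + a₃ * t + a₄ * z + β₁) with hG₁
  set G₂ := deriv (deriv g₂) (b₁ * x + b₂ * r + b₃ * t + b₄ * z + β₂) with hG₂
  set G₃ := deriv (deriv g₃) (c₁ * x + c₂ * r + c₃ * t + c₄ * z + β₃) with hG₃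
  set G₄ := deriv (deriv g₄) (d₁ * x + d₂ * r + d₃ * t + d₄ * z + β₄) with hG₄
  have H33 : pd3 (pd3 (fun x r t z =>
      g₁ (a₁ * x + a₂ * r + a₃ * t + a₄ * z + β₁)
        + g₂ (b₁ * x + b₂ * r + b₃ * t + b₄ * z + β₂)
        + g₃ (c₁ * x + c₂ * r + c₃ * t + c₄ * z + β₃)
        + g₄ (d₁ * x + d₂ * r + d₃ * t + d₄ * z + β₄))) x r t z
      = a₃ * (a₃ * G₁) + b₃ * (b₃ * G₂) + c₃ * (c₃ * G₃) + d₃ * (d₃ * G₄) := by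
    rw [h3]
    simp only [pd3]
    have e₁ : ∀ s : ℂ, a₁ * x + a₂ * r + a₃ * s + a₄ * z + β₁
        = a₃ * s + (a₁ * x + a₂ * r + a₄ * z + β₁) := fun s => by ring
    have e₂ : ∀ s : ℂ, b₁ * x + b₂ * r + b₃ * s + b₄ * z + β₂
        = b₃ * s + (b₁ * x + b₂ * r + b₄ * z + β₂) := fun s => by ring
    have e₃ : ∀ s : ℂ, c₁ * x + c₂ * r + c₃ * s + c₄ * z + β₃
        = c₃ * s + (c₁ * x + c₂ * r + c₄ * z + β₃) := fun s => by ring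
    have e₄ : ∀ s : ℂ, d₁ * x + d₂ * r + d₃ * s + d₄ * z + β₄
        = d₃ * s + (d₁ * x + d₂ * r + d₄ * z + β₄) := fun s => by ring
    simp only [hG₁, hG₂, hG₃, hG₄, e₁, e₂, e₃, e₄]
    rw [derivSum (deriv g₁) (deriv g₂) (deriv g₃) (deriv g₄) hd₁' hd₂' hd₃' hd₄']
  have H22 : pd2 (pd2 (fun x r t z =>
      g₁ (a₁ * x + a₂ * r + a₃ * t + a₄ * z + β₁)
        + g₂ (b₁ * x + b₂ * r + b₃ * t + b₄ * z + β₂)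
        + g₃ (c₁ * x + c₂ * r + c₃ * t + c₄ * z + β₃)
        + g₄ (d₁ * x + d₂ * r + d₃ * t + d₄ * z + β₄))) x r t z
      = a₂ * (a₂ * G₁) + b₂ * (b₂ * G₂) + c₂ * (c₂ * G₃) + d₂ * (d₂ * G₄) := by
    rw [h2]
    simp only [pd2]
    have e₁ : ∀ s : ℂ, a₁ * x + a₂ * s + a₃ * t + a₄ * z + β₁
        = a₂ * s + (a₁ * x + a₃ * t + a₄ * z + β₁) := fun s => by ring
    have e₂ : ∀ s : ℂ, b₁ * x + b₂ * s + b₃ * t + b₄ * z + β₂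
        = b₂ * s + (b₁ * x + b₃ * t + b₄ * z + β₂) := fun s => by ring
    have e₃ : ∀ s : ℂ, c₁ * x + c₂ * s + c₃ * t + c₄ * z + β₃
        = c₂ * s + (c₁ * x + c₃ * t + c₄ * z + β₃) := fun s => by ring
    have e₄ : ∀ s : ℂ, d₁ * x + d₂ * s + d₃ * t + d₄ * z + β₄
        = d₂ * s + (d₁ * x + d₃ * t + d₄ * z + β₄) := fun s => by ring
    simp only [hG₁, hG₂, hG₃, hG₄, e₁, e₂, e₃, e₄]
    rw [derivSum (deriv g₁) (deriv g₂) (deriv g₃) (deriv g₄) hd₁' hd₂' hd₃' hd₄']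
  have H23 : pd2 (pd3 (fun x r t z =>
      g₁ (a₁ * x + a₂ * r + a₃ * t + a₄ * z + β₁)
        + g₂ (b₁ * x + b₂ * r + b₃ * t + b₄ * z + β₂)
        + g₃ (c₁ * x + c₂ * r + c₃ * t + c₄ * z + β₃)
        + g₄ (d₁ * x + d₂ * r + d₃ * t + d₄ * z + β₄))) x r t z
      = a₃ * (a₂ * G₁) + b₃ * (b₂ * G₂) + c₃ * (c₂ * G₃) + d₃ * (d₂ * G₄) := by
    rw [h3]
    simp only [pd2]
    have e₁ : ∀ s : ℂ, a₁ * x + a₂ * s + a₃ * t + a₄ * z + β₁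
        = a₂ * s + (a₁ * x + a₃ * t + a₄ * z + β₁) := fun s => by ring
    have e₂ : ∀ s : ℂ, b₁ * x + b₂ * s + b₃ * t + b₄ * z + β₂
        = b₂ * s + (b₁ * x + b₃ * t + b₄ * z + β₂) := fun s => by ring
    have e₃ : ∀ s : ℂ, c₁ * x + c₂ * s + c₃ * t + c₄ * z + β₃
        = c₂ * s + (c₁ * x + c₃ * t + c₄ * z + β₃) := fun s => by ring
    have e₄ : ∀ s : ℂ, d₁ * x + d₂ * s + d₃ * t + d₄ * z + β₄
        = d₂ * s + (d₁ * x + d₃ * t + d₄ * z + β₄) := fun s => by ring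
    simp only [hG₁, hG₂, hG₃, hG₄, e₁, e₂, e₃, e₄]
    rw [derivSum (deriv g₁) (deriv g₂) (deriv g₃) (deriv g₄) hd₁' hd₂' hd₃' hd₄']
  rw [H33, H22, H23]
  constructor
  · ring
  · constructor <;> intro h hn <;> apply h <;> rw [← hn] <;> ring
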